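/- Vertex cover kernel size bound: Let G be a graph that has a vertex cover of size at most k, and let G' be the graph obtained from G by deleting all vertices of degree greater than k. Then G' has at most k² edges and at most 2k² non-isolated vertices. -/

import Mathlib

open SimpleGraph

/-- Vertex cover kernel size bound: if `G` has a vertex cover of size at most `k` and `G'`
is the subgraph of `G` induced by the vertices of degree at most `k`, then `G'` has at most
`k²` edges and at most `2k²` non-isolated vertices. -/
lemma induce_degree_le {V : Type} [Fintype V] [DecidableEq V]
    (G : SimpleGraph V) [DecidableRel G.Adj] (s : Set V) [DecidablePred (· ∈ s)]
    (v : s) : (SimpleGraph.induce s G).degree v ≤ G.degree (v : V) := by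
  classical
  rw [← card_neighborFinset_eq_degree, ← card_neighborFinset_eq_degree]
  refine Finset.card_le_card_of_injOn (fun x => (x : V)) ?_ ?_
  · intro x hx
    simp only [Finset.mem_coe, mem_neighborFinset] at hx ⊢
    exact hx
  · intro a _ b _ h
    exact Subtype.ext h

theorem vertexCover_kernel_bound {V : Type} [Fintype V] [DecidableEq V]
    (G : SimpleGraph V) [DecidableRel G.Adj] (k : ℕ) (C : Finset V)
    (hvc : ∀ u v : V, G.Adj u v → u ∈ C ∨ v ∈ C) (hC : C.card ≤ k) :
    (SimpleGraph.induce {v : V | G.degree v ≤ k} G).edgeSet.ncard ≤ k ^ 2 ∧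
    {x : {v : V | G.degree v ≤ k} |
        ∃ y, (SimpleGraph.induce {v : V | G.degree v ≤ k} G).Adj x y}.ncard ≤ 2 * k ^ 2 := by
  classical
  set S : Set V := {v : V | G.degree v ≤ k} with hS
  set G' := SimpleGraph.induce S G with hG'
  set C' : Finset S := C.subtype (· ∈ S) with hC'
  have hC'card : C'.card ≤ k := le_trans (by
    simpa [hC'] using Finset.card_filter_le C (· ∈ S)) hC
  have hdeg : ∀ v : S, G'.degree v ≤ k := fun v =>
    le_trans (induce_degree_le G S v) v.2
  -- edge bound
  have hesub : G'.edgeFinset ⊆ C'.biUnion (fun v => G'.incidenceFinset v) := by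
    intro e he
    rw [mem_edgeFinset] at he
    induction e with
    | h a b =>
      have hadj : G'.Adj a b := he
      have hGadj : G.Adj (a : V) (b : V) := hadj
      rcases hvc _ _ hGadj with h | h
      · refine Finset.mem_biUnion.2 ⟨a, ?_, ?_⟩
        · simp [hC', h, a.2]
        · rw [mem_incidenceFinset]
          exact ⟨he, Sym2.mem_mk_left _ _⟩
      · refine Finset.mem_biUnion.2 ⟨b, ?_, ?_⟩
        · simp [hC', h, b.2]
        · rw [mem_incidenceFinset]
          exact ⟨he, Sym2.mem_mk_right _ _⟩
  have hecard : G'.edgeFinset.card ≤ k ^ 2 := by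
    calc G'.edgeFinset.card ≤ (C'.biUnion (fun v => G'.incidenceFinset v)).card :=
          Finset.card_le_card hesub
      _ ≤ ∑ v ∈ C', (G'.incidenceFinset v).card := Finset.card_biUnion_le
      _ ≤ ∑ _v ∈ C', k := Finset.sum_le_sum (fun v _ => by
          rw [card_incidenceFinset_eq_degree]; exact hdeg v)
      _ = C'.card * k := by rw [Finset.sum_const, smul_eq_mul]
      _ ≤ k * k := Nat.mul_le_mul_right k hC'card
      _ = k ^ 2 := (sq k).symm
  refine ⟨?_, ?_⟩
  · calc G'.edgeSet.ncard = G'.edgeFinset.card := by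
          simp [Set.ncard_eq_toFinset_card', edgeFinset]
      _ ≤ k ^ 2 := hecard
  · set F : Finset S := C' ∪ C'.biUnion (fun v => G'.neighborFinset v) with hF
    have hsub : {x : S | ∃ y, G'.Adj x y} ⊆ (F : Set S) := by
      intro x hx
      obtain ⟨y, hxy⟩ := hx
      have hGadj : G.Adj (x : V) (y : V) := hxy
      rcases hvc _ _ hGadj with h | h
      · exact Finset.mem_coe.2 (Finset.mem_union_left _ (by simp [hC', h, x.2]))
      · refine Finset.mem_coe.2 (Finset.mem_union_right _ (Finset.mem_biUnion.2
          ⟨y, by simp [hC', h, y.2], ?_⟩))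
        rw [mem_neighborFinset]
        exact hxy.symm
    calc {x : S | ∃ y, G'.Adj x y}.ncard ≤ (F : Set S).ncard :=
          Set.ncard_le_ncard hsub (Finset.finite_toSet F)
      _ = F.card := Set.ncard_coe_finset F
      _ ≤ C'.card + ∑ v ∈ C', (G'.neighborFinset v).card :=
          le_trans (Finset.card_union_le _ _) (Nat.add_le_add_left Finset.card_biUnion_le _)
      _ ≤ k + k * k := Nat.add_le_add hC'card (le_trans
          (Finset.sum_le_sum (fun v _ => hdeg v))
          (by rw [Finset.sum_const, smul_eq_mul]; exact Nat.mul_le_mul_right k hC'card))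
      _ ≤ 2 * k ^ 2 := by nlinarith
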